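/- arXiv:0905.3802 — 4 statements merged into one kernel-verified Lean document; each statement's English description precedes it below -/
import Mathlib

section
/- If E is an elementary set for a disjunctive program P, then the subgraph of the positive dependency graph of P induced by E is strongly connected (i.e., for all atoms m, n in E, n is reachable from m via directed edges within E). -/
structure Rule (α : Type) where
  B : Finset α
  F : Finset α
  H : Finset α

variable {α : Type}

/-- Z is outbound in Y for program P. -/
def Outbound [DecidableEq α] (P : Set (Rule α)) (Y Z : Finset α) : Prop :=
  ∃ r ∈ P, (r.H ∩ Z).Nonempty ∧ (r.B ∩ (Y \ Z)).Nonempty ∧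
    r.B ∩ Z = ∅ ∧ r.H ∩ (Y \ Z) = ∅

/-- Y is an elementary set for P. -/
def Elementary [DecidableEq α] (P : Set (Rule α)) (Y : Finset α) : Prop :=
  Y.Nonempty ∧ ∀ Z : Finset α, Z ⊂ Y → Z.Nonempty → Outbound P Y Z

/-- X is a disjunctive set for P. -/
def DisjSet [DecidableEq α] (P : Set (Rule α)) (X : Finset α) : Prop :=
  ∃ r ∈ P, 1 < (r.H ∩ X).card

/-- The projection P_X of P on a set X of atoms. -/
def proj [DecidableEq α] (P : Set (Rule α)) (X : Finset α) : Set (Rule α) :=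
  {r' | ∃ r ∈ P, (r.B ∩ X).Nonempty ∧ (r.H ∩ X).Nonempty ∧
        r' = ⟨r.B ∩ X, ∅, r.H ∩ X⟩}

/-- P is head-elementary-set-free. -/
def HEF [DecidableEq α] (P : Set (Rule α)) : Prop :=
  ∀ r ∈ P, ∀ E : Finset α, Elementary P E → (E ∩ r.H).card ≤ 1

/-- The subgraph of the positive dependency graph induced by an elementary set
is strongly connected. -/
theorem stmt0 {α : Type} [DecidableEq α] (P : Set (Rule α)) (hfin : P.Finite)
    (E : Finset α) (hE : Elementary P E) :
    ∀ m ∈ E, ∀ n ∈ E,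
      Relation.ReflTransGen
        (fun x y => x ∈ E ∧ y ∈ E ∧ ∃ r ∈ P, x ∈ r.B ∧ y ∈ r.H) m n := by
  classical
  intro m hm n hn
  set Rel : α → α → Prop :=
    fun x y => x ∈ E ∧ y ∈ E ∧ ∃ r ∈ P, x ∈ r.B ∧ y ∈ r.H with hRel
  set Z := E.filter (fun x => Relation.ReflTransGen Rel x n) with hZ
  have hnZ : n ∈ Z := Finset.mem_filter.2 ⟨hn, Relation.ReflTransGen.refl⟩
  have hsub : Z ⊆ E := Finset.filter_subset _ _
  by_cases hcase : Z = E
  · have : m ∈ Z := hcase ▸ hm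
    exact (Finset.mem_filter.1 this).2
  · exfalso
    have hss : Z ⊂ E := ⟨hsub, fun h => hcase (le_antisymm hsub h)⟩
    obtain ⟨r, hrP, ⟨h, hh⟩, ⟨b, hb⟩, hBZ, hHE⟩ := hE.2 Z hss ⟨n, hnZ⟩
    obtain ⟨hhH, hhZ⟩ := Finset.mem_inter.1 hh
    obtain ⟨hbB, hbE⟩ := Finset.mem_inter.1 hb
    obtain ⟨hbE', hbZ⟩ := Finset.mem_sdiff.1 hbE
    have hhn : Relation.ReflTransGen Rel h n := (Finset.mem_filter.1 hhZ).2
    have hedge : Rel b h := ⟨hbE', hsub hhZ, r, hrP, hbB, hhH⟩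
    have : b ∈ Z := Finset.mem_filter.2 ⟨hbE', Relation.ReflTransGen.head hedge hhn⟩
    exact hbZ this
end

section
/- For any disjunctive program P and any set E of atoms, E is an elementary set for P if and only if E is an elementary set for the projected program P_E. -/
variable {α : Type}

theorem stmt3 {α : Type} [DecidableEq α] (P : Set (Rule α)) (hfin : P.Finite)
    (E : Finset α) :
    Elementary P E ↔ Elementary (proj P E) E := by
  have key : ∀ Z : Finset α, Z ⊆ E → (Outbound P E Z ↔ Outbound (proj P E) E Z) := by
    intro Z hZ
    constructor
    · rintro ⟨r, hr, h1, h2, h3, h4⟩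
      refine ⟨⟨r.B ∩ E, ∅, r.H ∩ E⟩, ⟨r, hr, ?_, ?_, rfl⟩, ?_, ?_, ?_, ?_⟩
      · exact h2.mono (Finset.inter_subset_inter (subset_refl _) Finset.sdiff_subset)
      · exact h1.mono (Finset.inter_subset_inter (subset_refl _) hZ)
      · have : r.H ∩ E ∩ Z = r.H ∩ Z := by
          rw [Finset.inter_assoc, Finset.inter_eq_right.mpr hZ]
        simpa [this] using h1
      · have : r.B ∩ E ∩ (E \ Z) = r.B ∩ (E \ Z) := by
          rw [Finset.inter_assoc, Finset.inter_eq_right.mpr Finset.sdiff_subset]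
        simpa [this] using h2
      · have : r.B ∩ E ∩ Z = r.B ∩ Z := by
          rw [Finset.inter_assoc, Finset.inter_eq_right.mpr hZ]
        simp [this, h3]
      · have : r.H ∩ E ∩ (E \ Z) = r.H ∩ (E \ Z) := by
          rw [Finset.inter_assoc, Finset.inter_eq_right.mpr Finset.sdiff_subset]
        simp [this, h4]
    · rintro ⟨r', ⟨r, hr, hb, hh, rfl⟩, h1, h2, h3, h4⟩
      refine ⟨r, hr, ?_, ?_, ?_, ?_⟩
      · exact h1.mono (Finset.inter_subset_inter Finset.inter_subset_left (subset_refl _))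
      · exact h2.mono (Finset.inter_subset_inter Finset.inter_subset_left (subset_refl _))
      · have e1 : r.B ∩ E ∩ Z = r.B ∩ Z := by
          rw [Finset.inter_assoc, Finset.inter_eq_right.mpr hZ]
        simpa [e1] using h3
      · have e1 : r.H ∩ E ∩ (E \ Z) = r.H ∩ (E \ Z) := by
          rw [Finset.inter_assoc, Finset.inter_eq_right.mpr Finset.sdiff_subset]
        simpa [e1] using h4
  constructor
  · rintro ⟨hne, h⟩
    exact ⟨hne, fun Z hZ hZne => (key Z hZ.subset).mp (h Z hZ hZne)⟩
  · rintro ⟨hne, h⟩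
    exact ⟨hne, fun Z hZ hZne => (key Z hZ.subset).mpr (h Z hZ hZne)⟩
end

section
/- A disjunctive program P is not HEF if and only if there exists a set E of atoms such that E is a disjunctive set for P (some rule of P has two or more head atoms in E) and there exists a non-disjunctive program P_red ⊆ P_E (every rule of P_red has a head of cardinality at most one) such that E is elementary for P_red. -/
variable {α : Type}

/-- The singleton-head part of the projection. -/
def Pred0 [DecidableEq α] (P : Set (Rule α)) (X : Finset α) : Set (Rule α) :=
  {r | r ∈ proj P X ∧ r.H.card ≤ 1}

lemma pred0_subset [DecidableEq α] (P : Set (Rule α)) (X : Finset α) :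
    Pred0 P X ⊆ proj P X := fun _ hr => hr.1

lemma exists_min_set {S : Set (Finset α)} (hS : S.Nonempty) :
    ∃ Z ∈ S, ∀ W ∈ S, ¬ W ⊂ Z := by
  classical
  by_contra h
  push_neg at h
  obtain ⟨Z0, hZ0⟩ := hS
  have key : ∀ n, ∀ Z ∈ S, ¬ Z.card ≤ n := by
    intro n
    induction n with
    | zero =>
      intro Z hZ hc
      obtain ⟨W, hW, hWZ⟩ := h Z hZ
      have := Finset.card_lt_card hWZ
      omega
    | succ n ih =>
      intro Z hZ hc
      obtain ⟨W, hW, hWZ⟩ := h Z hZ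
      have := Finset.card_lt_card hWZ
      exact ih W hW (by omega)
  exact key Z0.card Z0 hZ0 le_rfl

lemma main_lemma [DecidableEq α] (P : Set (Rule α)) :
    ∀ n (E : Finset α), E.card ≤ n → Elementary P E → DisjSet P E →
      ∃ E', DisjSet P E' ∧ Elementary (Pred0 P E') E' := by
  intro n
  induction n with
  | zero =>
    intro E hcard hel _
    obtain ⟨x, hx⟩ := hel.1
    have : 0 < E.card := Finset.card_pos.mpr ⟨x, hx⟩
    omega
  | succ n ih =>
    intro E hcard hel hdisj
    by_cases hC : ∀ Z : Finset α, Z ⊂ E → Z.Nonempty → Outbound (Pred0 P E) E Z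
    · exact ⟨E, hdisj, hel.1, hC⟩
    · push_neg at hC
      -- the set of "failing" subsets
      set S : Set (Finset α) :=
        {Z | Z ⊂ E ∧ Z.Nonempty ∧ ¬ Outbound (Pred0 P E) E Z} with hSdef
      have hSne : S.Nonempty := by
        obtain ⟨Z, h1, h2, h3⟩ := hC
        exact ⟨Z, h1, h2, h3⟩
      obtain ⟨Z, hZS, hZmin⟩ := exists_min_set hSne
      obtain ⟨hZE, hZne, hZfail⟩ := hZS
      have hZsub : Z ⊆ E := hZE.subset
      -- Z has a "big head" witness, giving DisjSet P Z
      obtain ⟨r, hrP, w1, w2, w3, w4⟩ := hel.2 Z hZE hZne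
      have hHZE : r.H ∩ E = r.H ∩ Z := by
        apply Finset.Subset.antisymm
        · intro x hx
          rw [Finset.mem_inter] at hx ⊢
          refine ⟨hx.1, ?_⟩
          by_contra hxZ
          have : x ∈ r.H ∩ (E \ Z) := by
            rw [Finset.mem_inter, Finset.mem_sdiff]; exact ⟨hx.1, hx.2, hxZ⟩
          rw [w4] at this
          exact absurd this (Finset.notMem_empty x)
        · exact fun x hx => Finset.mem_inter.mpr
            ⟨(Finset.mem_inter.mp hx).1, hZsub (Finset.mem_inter.mp hx).2⟩
      have hdisjZ : DisjSet P Z := by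
        refine ⟨r, hrP, ?_⟩
        by_contra hle
        push_neg at hle
        have hone : (r.H ∩ Z).card = 1 := by
          have := Finset.card_pos.mpr w1
          omega
        -- then r projects to a singleton-head rule witnessing Z, contradiction
        apply hZfail
        refine ⟨⟨r.B ∩ E, ∅, r.H ∩ E⟩, ⟨⟨r, hrP, ?_, ?_, rfl⟩, ?_⟩, ?_, ?_, ?_, ?_⟩
        · obtain ⟨x, hx⟩ := w2
          rw [Finset.mem_inter, Finset.mem_sdiff] at hx
          exact ⟨x, Finset.mem_inter.mpr ⟨hx.1, hx.2.1⟩⟩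
        · rw [hHZE]; exact w1
        · show (r.H ∩ E).card ≤ 1
          rw [hHZE, hone]
        · show ((r.H ∩ E) ∩ Z).Nonempty
          rw [hHZE, Finset.inter_assoc, Finset.inter_self]
          exact w1
        · show ((r.B ∩ E) ∩ (E \ Z)).Nonempty
          rw [Finset.inter_assoc, Finset.inter_eq_right.mpr (Finset.sdiff_subset)]
          exact w2
        · show (r.B ∩ E) ∩ Z = ∅
          rw [Finset.inter_assoc, Finset.inter_eq_right.mpr hZsub]
          exact w3
        · show (r.H ∩ E) ∩ (E \ Z) = ∅
          rw [Finset.inter_assoc, Finset.inter_eq_right.mpr (Finset.sdiff_subset)]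
          exact w4
      -- Z is elementary for P
      have helZ : Elementary P Z := by
        refine ⟨hZne, fun W hWZ hWne => ?_⟩
        have hWE : W ⊂ E := hWZ.trans hZE
        have hWS : W ∉ S := fun hW => hZmin W hW hWZ
        have hWout : Outbound (Pred0 P E) E W := by
          by_contra hno
          exact hWS ⟨hWE, hWne, hno⟩
        obtain ⟨r', ⟨⟨r0, hr0P, hB0, hH0, hEq⟩, hcard1⟩, k1, k2, k3, k4⟩ := hWout
        have hWsub : W ⊆ E := hWE.subset
        by_cases hcase : (r'.B ∩ (Z \ W)).Nonempty
        · -- r0 witnesses outboundness of W in Z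
          refine ⟨r0, hr0P, ?_, ?_, ?_, ?_⟩
          · -- r0.H ∩ W nonempty
            obtain ⟨x, hx⟩ := k1
            rw [hEq] at hx
            simp only [Finset.mem_inter] at hx
            exact ⟨x, Finset.mem_inter.mpr ⟨hx.1.1, hx.2⟩⟩
          · -- r0.B ∩ (Z \ W) nonempty
            obtain ⟨x, hx⟩ := hcase
            rw [hEq] at hx
            simp only [Finset.mem_inter] at hx
            exact ⟨x, Finset.mem_inter.mpr ⟨hx.1.1, hx.2⟩⟩
          · -- r0.B ∩ W = ∅
            rw [Finset.eq_empty_iff_forall_notMem]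
            intro x hx
            rw [Finset.mem_inter] at hx
            have : x ∈ r'.B ∩ W := by
              rw [hEq, Finset.mem_inter, Finset.mem_inter]
              exact ⟨⟨hx.1, hWsub hx.2⟩, hx.2⟩
            rw [k3] at this
            exact absurd this (Finset.notMem_empty x)
          · -- r0.H ∩ (Z \ W) = ∅
            rw [Finset.eq_empty_iff_forall_notMem]
            intro x hx
            rw [Finset.mem_inter, Finset.mem_sdiff] at hx
            have : x ∈ r'.H ∩ (E \ W) := by
              rw [hEq, Finset.mem_inter, Finset.mem_inter, Finset.mem_sdiff]
              exact ⟨⟨hx.1, hZsub hx.2.1⟩, hZsub hx.2.1, hx.2.2⟩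
            rw [k4] at this
            exact absurd this (Finset.notMem_empty x)
        · -- otherwise r' witnesses outboundness of Z in Pred0, contradiction
          exfalso
          apply hZfail
          refine ⟨r', ⟨⟨r0, hr0P, hB0, hH0, hEq⟩, hcard1⟩, ?_, ?_, ?_, ?_⟩
          · obtain ⟨x, hx⟩ := k1
            rw [Finset.mem_inter] at hx
            exact ⟨x, Finset.mem_inter.mpr ⟨hx.1, hWZ.subset hx.2⟩⟩
          · obtain ⟨x, hx⟩ := k2
            rw [Finset.mem_inter, Finset.mem_sdiff] at hx
            refine ⟨x, Finset.mem_inter.mpr ⟨hx.1, Finset.mem_sdiff.mpr ⟨hx.2.1, ?_⟩⟩⟩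
            intro hxZ
            exact hcase ⟨x, Finset.mem_inter.mpr ⟨hx.1,
              Finset.mem_sdiff.mpr ⟨hxZ, hx.2.2⟩⟩⟩
          · rw [Finset.eq_empty_iff_forall_notMem]
            intro x hx
            rw [Finset.mem_inter] at hx
            by_cases hxW : x ∈ W
            · have : x ∈ r'.B ∩ W := Finset.mem_inter.mpr ⟨hx.1, hxW⟩
              rw [k3] at this
              exact absurd this (Finset.notMem_empty x)
            · exact hcase ⟨x, Finset.mem_inter.mpr ⟨hx.1,
                Finset.mem_sdiff.mpr ⟨hx.2, hxW⟩⟩⟩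
          · rw [Finset.eq_empty_iff_forall_notMem]
            intro x hx
            rw [Finset.mem_inter, Finset.mem_sdiff] at hx
            have : x ∈ r'.H ∩ (E \ W) := by
              rw [Finset.mem_inter, Finset.mem_sdiff]
              exact ⟨hx.1, hx.2.1, fun hxW => hx.2.2 (hWZ.subset hxW)⟩
            rw [k4] at this
            exact absurd this (Finset.notMem_empty x)
      -- recurse
      have hZcard : Z.card ≤ n := by
        have := Finset.card_lt_card hZE
        omega
      exact ih Z hZcard helZ hdisjZ

theorem stmt5 {α : Type} [DecidableEq α] (P : Set (Rule α)) (hfin : P.Finite) :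
    ¬ HEF P ↔
      ∃ E : Finset α, DisjSet P E ∧
        ∃ Pred : Set (Rule α), Pred ⊆ proj P E ∧
          (∀ r ∈ Pred, r.H.card ≤ 1) ∧ Elementary Pred E := by
  constructor
  · intro hnot
    unfold HEF at hnot
    push_neg at hnot
    obtain ⟨r, hrP, E, hElem, hcard⟩ := hnot
    have hdisj : DisjSet P E := ⟨r, hrP, by rwa [Finset.inter_comm]⟩
    obtain ⟨E', hd', hel'⟩ := main_lemma P E.card E le_rfl hElem hdisj
    exact ⟨E', hd', Pred0 P E', pred0_subset P E', fun r hr => hr.2, hel'⟩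
  · rintro ⟨E, hdisj, Pred, hsub, _, hel⟩ hHEF
    obtain ⟨r, hrP, hr2⟩ := hdisj
    have hElemP : Elementary P E := by
      refine ⟨hel.1, fun Z hZE hZne => ?_⟩
      have hZsub : Z ⊆ E := hZE.subset
      obtain ⟨r', hr'Pred, h1, h2, h3, h4⟩ := hel.2 Z hZE hZne
      obtain ⟨r0, hr0P, hB0, hH0, hEq⟩ := hsub hr'Pred
      refine ⟨r0, hr0P, ?_, ?_, ?_, ?_⟩
      · obtain ⟨x, hx⟩ := h1
        rw [hEq] at hx
        simp only [Finset.mem_inter] at hx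
        exact ⟨x, Finset.mem_inter.mpr ⟨hx.1.1, hx.2⟩⟩
      · obtain ⟨x, hx⟩ := h2
        rw [hEq] at hx
        simp only [Finset.mem_inter] at hx
        exact ⟨x, Finset.mem_inter.mpr ⟨hx.1.1, hx.2⟩⟩
      · rw [Finset.eq_empty_iff_forall_notMem]
        intro x hx
        rw [Finset.mem_inter] at hx
        have : x ∈ r'.B ∩ Z := by
          rw [hEq, Finset.mem_inter, Finset.mem_inter]
          exact ⟨⟨hx.1, hZsub hx.2⟩, hx.2⟩
        rw [h3] at this
        exact absurd this (Finset.notMem_empty x)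
      · rw [Finset.eq_empty_iff_forall_notMem]
        intro x hx
        rw [Finset.mem_inter, Finset.mem_sdiff] at hx
        have : x ∈ r'.H ∩ (E \ Z) := by
          rw [hEq, Finset.mem_inter, Finset.mem_inter, Finset.mem_sdiff]
          exact ⟨⟨hx.1, hx.2.1⟩, hx.2.1, hx.2.2⟩
        rw [h4] at this
        exact absurd this (Finset.notMem_empty x)
    have := hHEF r hrP E hElemP
    rw [Finset.inter_comm] at this
    omega
end

section
/- Let P be a disjunctive program, E an elementary set for P, and P_red ⊆ P_E a witness of E containing a disjunctive rule δ* = (B*, H*) with |H*| > 1, such that E is not elementary for P_red \ {δ*}. Let S' be a minimal (with respect to inclusion) nonempty proper subset of E that is not outbound in E for P_red \ {δ*}. Then H* ⊆ S' and B* ⊆ E \ S'. -/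
variable {α : Type}

theorem stmt6 {α : Type} [DecidableEq α] (P Pred : Set (Rule α)) (hfin : P.Finite)
    (E : Finset α) (hE : Elementary P E)
    (hPred : Pred ⊆ proj P E) (hwit : Elementary Pred E)
    (δ : Rule α) (hδ : δ ∈ Pred) (hδdisj : 1 < δ.H.card)
    (hnotel : ¬ Elementary (Pred \ {δ}) E)
    (S' : Finset α) (hS'sub : S' ⊂ E) (hS'ne : S'.Nonempty)
    (hS'nout : ¬ Outbound (Pred \ {δ}) E S')
    (hS'min : ∀ T : Finset α, T ⊂ S' → T.Nonempty → Outbound (Pred \ {δ}) E T) :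
    δ.H ⊆ S' ∧ δ.B ⊆ E \ S' := by
  obtain ⟨r, hr, h1, h2, h3, h4⟩ := hwit.2 S' hS'sub hS'ne
  have hrδ : r = δ := by
    by_contra hne
    exact hS'nout ⟨r, ⟨hr, hne⟩, h1, h2, h3, h4⟩
  subst hrδ
  obtain ⟨r0, _, _, _, heq⟩ := hPred hδ
  have hH : r.H ⊆ E := by rw [heq]; exact Finset.inter_subset_right
  have hB : r.B ⊆ E := by rw [heq]; exact Finset.inter_subset_right
  constructor
  · intro x hx
    by_contra hxS
    have hxE : x ∈ E \ S' := Finset.mem_sdiff.2 ⟨hH hx, hxS⟩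
    exact absurd (Finset.mem_inter.2 ⟨hx, hxE⟩) (by simp [h4])
  · intro x hx
    refine Finset.mem_sdiff.2 ⟨hB hx, fun hxS => ?_⟩
    exact absurd (Finset.mem_inter.2 ⟨hx, hxS⟩) (by simp [h3])
end
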